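/- Let A ∈ F^{r×m} be a matrix of rank r representing the matroid M = M[A], and let A′ ∈ F^{(m−r)×m} be a matrix whose rows form a basis of the null space {x : Ax = 0}, so that M[A′] = M*. Then the Oxley–Wang derived matroid δ_OW M (the vector matroid on the circuit vectors of M) is isomorphic to the type I adjoint σM* of M* (the vector matroid on the normal vectors of the hyperplanes of M*). -/

import Mathlib

open Set Matroid
open scoped Matroid

namespace AdjointPaper

variable {α β γ : Type*}

/-- The rank of a set `X` in a matroid `M`: the supremum of cardinalities of
independent subsets of `X`. -/
noncomputable def mrank (M : Matroid α) (X : Set α) : ℕ :=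
  sSup (Set.ncard '' {I | M.Indep I ∧ I ⊆ X})

/-- The rank of a matroid. -/
noncomputable def mrk (M : Matroid α) : ℕ := mrank M M.E

/-- A hyperplane of `M`: a coatom of the lattice of flats. -/
def IsHyperplane (M : Matroid α) (H : Set α) : Prop :=
  M.IsFlat H ∧ H ≠ M.E ∧ ∀ F, M.IsFlat F → H ⊂ F → F = M.E

/-- An atom of the lattice of flats of `M`. -/
def IsFlatAtom (M : Matroid α) (P : Set α) : Prop :=
  M.IsFlat P ∧ M.closure ∅ ⊂ P ∧ ∀ F, M.IsFlat F → M.closure ∅ ⊂ F → F ⊆ P → F = P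

/-- `e` is a loop of `M`. -/
def IsLoop (M : Matroid α) (e : α) : Prop := e ∈ M.E ∧ ¬ M.Indep {e}

/-- `M` is loopless. -/
def Loopless (M : Matroid α) : Prop := ∀ e ∈ M.E, M.Indep {e}

/-- `M` is simple: loopless and with no two parallel elements. -/
def Simple (M : Matroid α) : Prop :=
  (∀ e ∈ M.E, M.Indep {e}) ∧
    ∀ e ∈ M.E, ∀ f ∈ M.E, M.closure {e} = M.closure {f} → e = f

/-- `φ` is an adjoint map from `M` to `N`: an injective, order-reversing map on
flats taking hyperplanes of `M` bijectively onto the atoms of `N`, with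
`N` of the same rank as `M`. -/
structure IsAdjointMap (M : Matroid α) (N : Matroid β) (φ : Set α → Set β) : Prop where
  rank_eq : mrk N = mrk M
  flat : ∀ ⦃F⦄, M.IsFlat F → N.IsFlat (φ F)
  inj : ∀ ⦃F F'⦄, M.IsFlat F → M.IsFlat F' → φ F = φ F' → F = F'
  antitone : ∀ ⦃F F'⦄, M.IsFlat F → M.IsFlat F' → F ⊆ F' → φ F' ⊆ φ F
  hyper_atom : ∀ ⦃H⦄, IsHyperplane M H → IsFlatAtom N (φ H)
  atom_surj : ∀ ⦃P⦄, IsFlatAtom N P → ∃ H, IsHyperplane M H ∧ φ H = P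

/-- `N` is an adjoint of `M`. -/
def IsAdjoint (M : Matroid α) (N : Matroid β) : Prop := ∃ φ, IsAdjointMap M N φ

/-- Isomorphism of matroids. -/
def Iso (M : Matroid α) (N : Matroid β) : Prop :=
  ∃ f : α → β, Set.BijOn f M.E N.E ∧ ∀ I ⊆ M.E, (M.Indep I ↔ N.Indep (f '' I))

/-- Connectedness: `M` has nonempty ground set and is not a direct sum of two
matroids on nonempty ground sets. -/
def Conn (M : Matroid α) : Prop :=
  M.E.Nonempty ∧ ∀ (N₁ N₂ : Matroid α) (h : Disjoint N₁.E N₂.E),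
    N₁.E.Nonempty → N₂.E.Nonempty → M ≠ Matroid.disjointSum N₁ N₂ h

/-- A circuit of `M`: a minimal dependent set. -/
def IsCircuit (M : Matroid α) (C : Set α) : Prop :=
  C ⊆ M.E ∧ ¬ M.Indep C ∧ ∀ D, D ⊂ C → M.Indep D

/-- `K` is a connected component of `M`. -/
def ConnComponent (M : Matroid α) (K : Set α) : Prop :=
  K ⊆ M.E ∧ K.Nonempty ∧ Conn (M ↾ K) ∧
    ∀ C, IsCircuit M C → C ⊆ K ∨ Disjoint C K

/-- `M` is a modular matroid: every pair of flats is a modular pair. -/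
def Modular (M : Matroid α) : Prop :=
  ∀ F F', M.IsFlat F → M.IsFlat F' →
    mrank M (M.closure (F ∪ F')) + mrank M (F ∩ F') = mrank M F + mrank M F'

/-- The lattice of flats of `N` is isomorphic to the opposite of the lattice of
flats of `M`. -/
def FlatOpIso (M : Matroid α) (N : Matroid β) : Prop :=
  ∃ ψ : Set α → Set β, (∀ F, M.IsFlat F → N.IsFlat (ψ F)) ∧
    (∀ F F', M.IsFlat F → M.IsFlat F' → (F ⊆ F' ↔ ψ F' ⊆ ψ F)) ∧
    ∀ G, N.IsFlat G → ∃ F, M.IsFlat F ∧ ψ F = G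

/-- A linear subclass of `M`: a set of hyperplanes closed under the hyperplanes
through a comodular intersection of two of its members. The lattice of all
linear subclasses ordered by inclusion is the extension lattice `E(M)`. -/
def LinearSubclass (M : Matroid α) (S : Set (Set α)) : Prop :=
  (∀ H ∈ S, IsHyperplane M H) ∧
    ∀ H₁ ∈ S, ∀ H₂ ∈ S, mrank M (H₁ ∩ H₂) = mrk M - 2 →
      ∀ H₃, IsHyperplane M H₃ → H₁ ∩ H₂ ⊆ H₃ → H₃ ∈ S

/-- `N` is (isomorphic to) the projective geometry `PG (r-1, F)`, via a
representation `f` hitting every point of the projective space exactly once. -/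
def IsProjGeomRep (N : Matroid β) (r : ℕ) (F : Type*) [Field F] : Prop :=
  ∃ f : β → (Fin r → F),
    (∀ e ∈ N.E, f e ≠ 0) ∧
    (∀ e ∈ N.E, ∀ e' ∈ N.E,
      Submodule.span F {f e} = Submodule.span F {f e'} → e = e') ∧
    (∀ v : Fin r → F, v ≠ 0 → ∃ e ∈ N.E, Submodule.span F {f e} = Submodule.span F {v}) ∧
    ∀ I, I ⊆ N.E → (N.Indep I ↔ LinearIndependent F (fun x : I => f x.1))

/-- `N` is (isomorphic to) the finite projective geometry `PG (r-1, q)`. -/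
def IsProjGeom (N : Matroid β) (r q : ℕ) : Prop :=
  ∃ (F : Type) (instF : Field F) (instT : Fintype F),
    @Fintype.card F instT = q ∧ @IsProjGeomRep _ N r F instF

/-- `M` is a projective plane: a simple rank-3 matroid in which every line has
at least three points and every two lines meet. -/
def IsProjPlane (M : Matroid α) : Prop :=
  Simple M ∧ mrk M = 3 ∧
    (∀ L, M.IsFlat L → mrank M L = 2 → 3 ≤ L.ncard) ∧
    ∀ L L', M.IsFlat L → M.IsFlat L' → mrank M L = 2 → mrank M L' = 2 → (L ∩ L').Nonempty

/-- `N` is (isomorphic to) the uniform matroid `U_{r,m}`. -/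
def IsUnif (N : Matroid β) (r m : ℕ) : Prop :=
  N.E.Finite ∧ N.E.ncard = m ∧ ∀ I, I ⊆ N.E → (N.Indep I ↔ I.Finite ∧ I.ncard ≤ r)

section helpers
variable {F : Type*} [Field F]

lemma sum_subtype_set {W : Type*} [AddCommMonoid W] {n : ℕ} (S : Set (Fin n))
    [DecidablePred (· ∈ S)] (f : Fin n → W) (hf : ∀ i ∉ S, f i = 0) :
    ∑ i : S, f (i : Fin n) = ∑ i, f i := by
  rw [← Finset.sum_subtype S.toFinset (fun x => Set.mem_toFinset) f]
  exact Finset.sum_subset (Finset.subset_univ _) fun x _ hx => hf x (by simpa using hx)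

lemma lemA {W : Type*} [AddCommGroup W] [Module F W] {n : ℕ} (v : Fin n → W) (S : Set (Fin n))
    (hv : LinearIndependent F (fun i : S => v i)) (g : Fin n → F)
    (hsupp : ∀ i ∉ S, g i = 0) (hsum : ∑ i, g i • v i = 0) : ∀ i, g i = 0 := by
  classical
  have h0 : ∑ i : S, g i • v (i : Fin n) = 0 := by
    rw [sum_subtype_set S (fun i => g i • v i)
      fun i hi => by simp only [hsupp i hi, zero_smul]]
    exact hsum
  have := Fintype.linearIndependent_iff.mp hv (fun i : S => g i) h0
  intro i
  by_cases hi : i ∈ S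
  · exact this ⟨i, hi⟩
  · exact hsupp i hi

lemma lemB {W : Type*} [AddCommGroup W] [Module F W] {n : ℕ} (v : Fin n → W) (S : Set (Fin n))
    (hv : ¬ LinearIndependent F (fun i : S => v i)) :
    ∃ g : Fin n → F, (∀ i ∉ S, g i = 0) ∧ ∑ i, g i • v i = 0 ∧ ∃ i, g i ≠ 0 := by
  classical
  obtain ⟨g', hsum, i0, hi0⟩ := Fintype.not_linearIndependent_iff.mp hv
  refine ⟨fun i => if h : i ∈ S then g' ⟨i, h⟩ else 0, fun i hi => dif_neg hi, ?_, ⟨i0, ?_⟩⟩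
  · rw [← sum_subtype_set S (fun i => (if h : i ∈ S then g' ⟨i, h⟩ else 0) • v i)
      (fun i hi => by simp only [dif_neg hi, zero_smul])]
    rw [← hsum]
    exact Finset.sum_congr rfl fun i _ => by rw [dif_pos i.2]
  · simpa [dif_pos i0.2] using hi0

lemma mulVec_eq_sum' {k n : ℕ} (B : Matrix (Fin k) (Fin n) F) (g : Fin n → F) :
    B.mulVec g = ∑ i, g i • B.transpose i := by
  funext j
  simp [Matrix.mulVec, dotProduct, Finset.sum_apply, mul_comm]

lemma vecMul_eq_sum' {k n : ℕ} (B : Matrix (Fin k) (Fin n) F) (g : Fin k → F) :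
    B.vecMul g = ∑ i, g i • B i := by
  funext j
  simp [Matrix.vecMul, dotProduct, Finset.sum_apply]

lemma ker_vecMulLinear {k n : ℕ} (B : Matrix (Fin k) (Fin n) F)
    (hB : LinearIndependent F (fun i => B i)) : LinearMap.ker B.vecMulLinear = ⊥ := by
  rw [LinearMap.ker_eq_bot']
  intro g hg
  rw [Matrix.vecMulLinear_apply, vecMul_eq_sum'] at hg
  funext i
  exact Fintype.linearIndependent_iff.mp hB g hg i

lemma closure_flat' (M : Matroid α) (X : Set α) : M.IsFlat (M.closure X) := by
  rw [Matroid.closure_def]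
  haveI : Nonempty ↑{F | M.IsFlat F ∧ X ∩ M.E ⊆ F} := ⟨⟨M.E, M.ground_isFlat, inter_subset_right⟩⟩
  rw [sInter_eq_iInter]
  exact Matroid.IsFlat.iInter fun F => F.2.1

end helpers

theorem key {F : Type*} [Field F] {r m : ℕ}
    (A : Matrix (Fin r) (Fin m) F)
    (M : Matroid (Fin m)) (hME : M.E = Set.univ)
    (hMrep : ∀ I : Set (Fin m),
      M.Indep I ↔ LinearIndependent F (fun i : I => A.transpose i.1))
    (A' : Matrix (Fin (m - r)) (Fin m) F)
    (hA'ind : LinearIndependent F (fun i => A' i))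
    (hA'span : Submodule.span F (Set.range fun i => A' i) = LinearMap.ker A.mulVecLin)
    (hdual : ∀ I : Set (Fin m),
      M✶.Indep I ↔ LinearIndependent F (fun i : I => A'.transpose i.1))
    (c : Set (Fin m) → (Fin m → F))
    (hc : ∀ C, IsCircuit M C → A.mulVec (c C) = 0 ∧ ∀ i, c C i ≠ 0 ↔ i ∈ C)
    (h : Set (Fin m) → (Fin (m - r) → F))
    (hh : ∀ H, IsHyperplane M✶ H → h H ≠ 0 ∧
      ∀ e ∈ H, dotProduct (h H) (A'.transpose e) = 0)
    (C : Set (Fin m)) (hC : IsCircuit M C) :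
    ∃ (y : Fin (m - r) → F) (a : F),
      A'.vecMulLinear y = c C ∧ a ≠ 0 ∧ h (Set.univ \ C) = a • y := by
  classical
  obtain ⟨hcC0, hcCsupp⟩ := hc C hC
  have hE' : M✶.E = univ := by rw [Matroid.dual_ground, hME]
  -- C is nonempty
  have hCne : C.Nonempty := by
    rcases C.eq_empty_or_nonempty with h0 | h0
    · exact absurd (h0 ▸ M.empty_indep) hC.2.1
    · exact h0
  -- c C vanishes off C
  have hcoff : ∀ i ∉ C, c C i = 0 := fun i hi => by
    by_contra hne; exact hi ((hcCsupp i).mp hne)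
  -- obtain y with vecMul y A' = c C
  have hmem : c C ∈ Submodule.span F (Set.range fun i => A' i) := by
    rw [hA'span]; simpa [Matrix.mulVecLin] using hcC0
  obtain ⟨y, hy⟩ := (Submodule.mem_span_range_iff_exists_fun F).mp hmem
  have hyc : A'.vecMulLinear y = c C := by
    rw [Matrix.vecMulLinear_apply, vecMul_eq_sum']; exact hy
  -- c C ≠ 0
  obtain ⟨e0, he0⟩ := hCne
  have hcCne : c C ≠ 0 := fun h0 => ((hcCsupp e0).mpr he0) (by rw [h0]; rfl)
  -- kernel vectors supported in an independent set vanish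
  have L0 : ∀ (D : Set (Fin m)), M.Indep D → ∀ z : Fin m → F, A.mulVec z = 0 →
      (∀ i ∉ D, z i = 0) → z = 0 := by
    intro D hD z hz hsupp
    funext i
    refine lemA A.transpose D ((hMrep D).mp hD) z hsupp ?_ i
    rw [← mulVec_eq_sum', hz]
  -- kernel vectors supported in C are multiples of c C
  have L1 : ∀ x : Fin m → F, A.mulVec x = 0 → (∀ i ∉ C, x i = 0) → ∃ a : F, x = a • c C := by
    intro x hx hsupp
    rcases eq_or_ne x 0 with rfl | hx0
    · exact ⟨0, by simp⟩
    obtain ⟨e, he⟩ := Function.ne_iff.mp hx0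
    have heC : e ∈ C := by
      by_contra heC; exact he (hsupp e heC)
    have hce : c C e ≠ 0 := (hcCsupp e).mpr heC
    refine ⟨x e / c C e, ?_⟩
    have hz : x - (x e / c C e) • c C = 0 := by
      refine L0 (C \ {e}) (hC.2.2 _ (Set.sdiff_singleton_ssubset.mpr heC)) _ ?_ ?_
      · rw [Matrix.mulVec_sub, Matrix.mulVec_smul, hx, hcC0, smul_zero, sub_zero]
      · intro i hi
        rcases eq_or_ne i e with rfl | hie
        · simp [div_mul_cancel₀ _ hce]
        · have hiC : i ∉ C := fun hiC => hi ⟨hiC, hie⟩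
          simp [hsupp i hiC, hcoff i hiC]
    exact sub_eq_zero.mp hz
  -- univ \ C is a hyperplane of the dual
  have hHsub : univ \ C ⊆ M✶.E := by rw [hE']; exact diff_subset
  have hflat : M✶.IsFlat (univ \ C) := by
    have hcl : M✶.closure (univ \ C) = univ \ C := by
      refine subset_antisymm ?_ (M✶.subset_closure _ hHsub)
      intro f hf
      by_contra hfH
      have hfC : f ∈ C := by
        by_contra hfC; exact hfH ⟨mem_univ f, hfC⟩
      obtain ⟨I, hI⟩ := M✶.exists_isBasis (univ \ C) hHsub
      have hfI : f ∉ I := fun hfI => hfH (hI.subset hfI)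
      have hfcl : f ∈ M✶.closure I := by rwa [hI.closure_eq_closure]
      have hdep : ¬ M✶.Indep (insert f I) :=
        ((hI.indep.mem_closure_iff_of_notMem hfI).mp hfcl).not_indep
      rw [hdual] at hdep
      obtain ⟨g, hg0, hgsum, i0, hgi0⟩ := lemB A'.transpose (insert f I) hdep
      -- g f ≠ 0
      have hgf : g f ≠ 0 := by
        intro h0
        have hIind := (hdual I).mp hI.indep
        have : ∀ i, g i = 0 := by
          refine lemA A'.transpose I hIind g (fun i hi => ?_) hgsum
          rcases eq_or_ne i f with rfl | hif
          · exact h0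
          · exact hg0 i (by simp [hif, hi])
        exact hgi0 (this i0)
      -- contradiction via dot product with y
      have hA'g : A'.mulVec g = 0 := by rw [mulVec_eq_sum']; exact hgsum
      have hdot : dotProduct (c C) g = 0 := by
        rw [← hyc, Matrix.vecMulLinear_apply, ← Matrix.dotProduct_mulVec, hA'g,
          dotProduct_zero]
      have : dotProduct (c C) g = c C f * g f := by
        rw [dotProduct]
        refine Finset.sum_eq_single f (fun i _ hif => ?_) (by simp)
        by_cases hiI : i ∈ I
        · rw [hcoff i (fun hiC => (hI.subset hiI).2 hiC), zero_mul]
        · rw [hg0 i (by simp [hif, hiI]), mul_zero]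
      rw [this] at hdot
      exact mul_ne_zero ((hcCsupp f).mpr hfC) hgf hdot
    rw [← hcl]; exact closure_flat' _ _
  have hhyp : IsHyperplane M✶ (univ \ C) := by
    refine ⟨hflat, ?_, ?_⟩
    · rw [hE']
      intro heq
      have : e0 ∈ univ \ C := by rw [heq]; exact mem_univ e0
      exact this.2 he0
    · intro G hG hssub
      obtain ⟨e, heG, heH⟩ := exists_of_ssubset hssub
      have heC : e ∈ C := by
        by_contra heC; exact heH ⟨mem_univ e, heC⟩
      obtain ⟨B, hB, hCB⟩ :=
        (hC.2.2 _ (Set.sdiff_singleton_ssubset.mpr heC)).exists_isBase_superset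
      have hB' : M✶.IsBase (M.E \ B) := hB.compl_isBase_dual
      have hsub : M.E \ B ⊆ insert e (univ \ C) := by
        intro x hx
        rcases eq_or_ne x e with rfl | hxe
        · exact mem_insert _ _
        · refine mem_insert_of_mem _ ⟨mem_univ x, fun hxC => hx.2 (hCB ⟨hxC, hxe⟩)⟩
      have hins : insert e (univ \ C) ⊆ G := insert_subset heG hssub.subset
      have hspan : M✶.closure (insert e (univ \ C)) = M✶.E :=
        hB'.closure_of_superset hsub
      refine subset_antisymm hG.subset_ground ?_
      rw [← hspan, ← hG.closure]
      exact M✶.closure_subset_closure hins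
  -- properties of h
  obtain ⟨hh0, hhperp⟩ := hh _ hhyp
  set x := A'.vecMul (h (univ \ C)) with hxdef
  have hxker : A.mulVec x = 0 := by
    have hmemx : x ∈ Submodule.span F (Set.range fun i => A' i) := by
      rw [hxdef, vecMul_eq_sum']
      exact Submodule.sum_mem _ fun i _ =>
        Submodule.smul_mem _ _ (Submodule.subset_span (mem_range_self i))
    rw [hA'span] at hmemx
    simpa [Matrix.mulVecLin] using hmemx
  have hxsupp : ∀ i ∉ C, x i = 0 := by
    intro i hi
    have : dotProduct (h (univ \ C)) (A'.transpose i) = 0 :=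
      hhperp i ⟨mem_univ i, hi⟩
    simpa [hxdef, Matrix.vecMul, dotProduct, Matrix.transpose_apply] using this
  obtain ⟨a, hax⟩ := L1 x hxker hxsupp
  have hane : a ≠ 0 := by
    rintro rfl
    rw [zero_smul] at hax
    apply hh0
    have h0 := ker_vecMulLinear A' hA'ind
    rw [LinearMap.ker_eq_bot'] at h0
    exact h0 _ (by rw [Matrix.vecMulLinear_apply, ← hxdef, hax])
  refine ⟨y, a, hyc, hane, ?_⟩
  have h0 := ker_vecMulLinear A' hA'ind
  rw [LinearMap.ker_eq_bot'] at h0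
  have : A'.vecMulLinear (h (univ \ C) - a • y) = 0 := by
    rw [map_sub, map_smul, hyc, Matrix.vecMulLinear_apply, ← hxdef, hax]
    simp
  have := h0 _ this
  rw [sub_eq_zero] at this
  exact this


/-- the Oxley–Wang derived matroid of `M = M[A]` is isomorphic to
the type I adjoint of `M✶ = M[A']`, via `C ↦ E ∖ C`. -/
theorem statement_16 {F : Type*} [Field F] {r m : ℕ} (hrm : r ≤ m)
    (A : Matrix (Fin r) (Fin m) F) (hA : A.rank = r)
    (M : Matroid (Fin m)) (hME : M.E = Set.univ)
    (hMrep : ∀ I : Set (Fin m),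
      M.Indep I ↔ LinearIndependent F (fun i : I => A.transpose i.1))
    (A' : Matrix (Fin (m - r)) (Fin m) F)
    (hA'ind : LinearIndependent F (fun i => A' i))
    (hA'span : Submodule.span F (Set.range fun i => A' i) = LinearMap.ker A.mulVecLin)
    (hdual : ∀ I : Set (Fin m),
      M✶.Indep I ↔ LinearIndependent F (fun i : I => A'.transpose i.1))
    (c : Set (Fin m) → (Fin m → F))
    (hc : ∀ C, IsCircuit M C → A.mulVec (c C) = 0 ∧ ∀ i, c C i ≠ 0 ↔ i ∈ C)
    (h : Set (Fin m) → (Fin (m - r) → F))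
    (hh : ∀ H, IsHyperplane M✶ H → h H ≠ 0 ∧
      ∀ e ∈ H, dotProduct (h H) (A'.transpose e) = 0) :
    ∀ Cs : Set (Set (Fin m)), (∀ C ∈ Cs, IsCircuit M C) →
      (LinearIndependent F (fun C : Cs => c C.1) ↔
        LinearIndependent F (fun C : Cs => h (Set.univ \ C.1))) := by
  classical
  intro Cs hCs
  have hker := ker_vecMulLinear A' hA'ind
  have hex : ∀ C : Cs, ∃ (y : Fin (m - r) → F) (a : F),
      A'.vecMulLinear y = c C.1 ∧ a ≠ 0 ∧ h (Set.univ \ C.1) = a • y :=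
    fun C => key A M hME hMrep A' hA'ind hA'span hdual c hc h hh C.1 (hCs C.1 C.2)
  choose y a hy ha hha using hex
  have hcomp : (fun C : Cs => c C.1) = A'.vecMulLinear ∘ y := funext fun C => (hy C).symm
  have h1 : LinearIndependent F (fun C : Cs => c C.1) ↔ LinearIndependent F y := by
    rw [hcomp]; exact LinearMap.linearIndependent_iff _ hker
  set u : Cs → Fˣ := fun C => Units.mk0 (a C) (ha C) with hu
  have hfun : (fun C : Cs => h (Set.univ \ C.1)) = fun C : Cs => (u C : F) • y C :=
    funext fun C => hha C
  have hiff : LinearIndependent F (fun C : Cs => (u C : F) • y C) ↔ LinearIndependent F y := by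
    constructor
    · intro h'
      have h2 := h'.units_smul u⁻¹
      have h3 : (u⁻¹ • fun C : Cs => (u C : F) • y C) = y := by
        funext C
        simp [Pi.smul_apply', Units.smul_def, smul_smul]
      rwa [h3] at h2
    · intro h'
      have h2 := h'.units_smul u
      have h3 : (u • y) = fun C : Cs => (u C : F) • y C := by
        funext C; simp [Pi.smul_apply', Units.smul_def]
      rwa [h3] at h2
  rw [h1, hfun, hiff]


end AdjointPaper
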